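/- Let G = (V, E) be a finite connected undirected simple graph with n = |V| ≥ 2 vertices and m = |E| edges, let Z denote its cycle space, and let b be a natural number with 2^b ≥ n·m. Then the number of b-tuples (φ_1, …, φ_b) of binary circulations for which there exists an edge e that is not a cut edge yet satisfies e ∉ φ_i for all i = 1, …, b, is at most |Z|^b / n. Equivalently, if φ_1, …, φ_b are independent uniformly random elements of the cycle space, then with probability at least 1 − 1/n every edge e with e ∉ φ_i for all i is a cut edge. -/

import Mathlib

open scoped Classical symmDiff

noncomputable section

variable {V : Type*}

/-- The induced edge cut `δ(S)`: the edges of `G` with exactly one endpoint in `S`. -/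
def edgeCut [Fintype V] (G : SimpleGraph V) (S : Set V) : Finset (Sym2 V) :=
  G.edgeFinset.filter fun e => ∀ u v : V, e = s(u, v) → (u ∈ S ↔ v ∉ S)

/-- `φ` is a binary circulation of `G`: a set of edges of `G` in which every vertex
has even degree. -/
def IsCirculation [Fintype V] (G : SimpleGraph V) (φ : Finset (Sym2 V)) : Prop :=
  ↑φ ⊆ G.edgeSet ∧ ∀ v : V, Even ((φ.filter fun e => v ∈ e).card)

/-- The characteristic vector of an edge set, as an element of `(ZMod 2)^E`. -/
def chi [Fintype V] (G : SimpleGraph V) (F : Finset (Sym2 V)) : G.edgeSet → ZMod 2 :=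
  fun e => if ↑e ∈ F then 1 else 0

/-- `e` is a cut edge of `G`: removing it disconnects `G`. -/
def IsCutEdge (G : SimpleGraph V) (e : Sym2 V) : Prop :=
  e ∈ G.edgeSet ∧ ¬(G.deleteEdges {e}).Connected

/-- `{e, f}` is a cut pair of `G`: two distinct edges, neither a cut edge, whose
joint removal disconnects `G`. -/
def IsCutPair (G : SimpleGraph V) (e f : Sym2 V) : Prop :=
  e ≠ f ∧ e ∈ G.edgeSet ∧ f ∈ G.edgeSet ∧ ¬IsCutEdge G e ∧ ¬IsCutEdge G f ∧
    ¬(G.deleteEdges {e, f}).Connected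

/-- `v` is a cut vertex of `G`: deleting `v` and its incident edges disconnects `G`. -/
def IsCutVertex (G : SimpleGraph V) (v : V) : Prop :=
  ¬(G.induce {u | u ≠ v}).Connected

/-- `T` is a spanning tree of `G`. -/
def IsSpanningTree (G T : SimpleGraph V) : Prop := T ≤ G ∧ T.IsTree

/-- `K` is a cut class of `G`: an inclusion-maximal set of more than one edge,
every two of which form a cut pair. -/
def IsCutClass (G : SimpleGraph V) (K : Finset (Sym2 V)) : Prop :=
  1 < K.card ∧ (∀ e ∈ K, ∀ f ∈ K, e ≠ f → IsCutPair G e f) ∧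
    ∀ K' : Finset (Sym2 V), K ⊆ K' →
      (1 < K'.card ∧ ∀ e ∈ K', ∀ f ∈ K', e ≠ f → IsCutPair G e f) → K' = K

lemma even_card_symmDiff {α : Type*} [DecidableEq α] {s t : Finset α}
    (hs : Even s.card) (ht : Even t.card) : Even ((s ∆ t).card) := by
  have h1 : s ∆ t = (s ∪ t) \ (s ∩ t) := symmDiff_eq_sup_sdiff_inf s t
  have h2 : (s ∪ t).card + (s ∩ t).card = s.card + t.card :=
    Finset.card_union_add_card_inter s t
  have h3 : ((s ∪ t) \ (s ∩ t)).card = (s ∪ t).card - (s ∩ t).card :=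
    Finset.card_sdiff_of_subset (Finset.inter_subset_union)
  have h4 : (s ∩ t).card ≤ (s ∪ t).card :=
    Finset.card_le_card Finset.inter_subset_union
  rw [h1, h3, Nat.even_iff] at *
  omega

lemma circulation_symmDiff [Fintype V] {G : SimpleGraph V} {φ ψ : Finset (Sym2 V)}
    (hφ : IsCirculation G φ) (hψ : IsCirculation G ψ) : IsCirculation G (φ ∆ ψ) := by
  constructor
  · rw [Finset.coe_symmDiff]
    intro e he
    rcases Set.mem_symmDiff.mp he with ⟨h, _⟩ | ⟨h, _⟩
    · exact hφ.1 h
    · exact hψ.1 h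
  · intro v
    have hfilter : (φ ∆ ψ).filter (fun e => v ∈ e)
        = (φ.filter fun e => v ∈ e) ∆ (ψ.filter fun e => v ∈ e) := by
      ext e
      simp only [Finset.mem_filter, Finset.mem_symmDiff]
      tauto
    rw [hfilter]
    exact even_card_symmDiff (hφ.2 v) (hψ.2 v)

lemma exists_circulation_of_not_cutEdge [Fintype V] {G : SimpleGraph V} {e : Sym2 V}
    (he : e ∈ G.edgeSet) (hnc : ¬IsCutEdge G e) : ∃ C, IsCirculation G C ∧ e ∈ C := by
  have hconn : (G.deleteEdges {e}).Connected := by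
    by_contra h; exact hnc ⟨he, h⟩
  induction e with
  | _ u w =>
    have hadj : G.Adj u w := he
    have hr : (G.deleteEdges {s(u, w)}).Reachable u w := hconn u w
    obtain ⟨p⟩ := hr
    set q : (G.deleteEdges {s(u, w)}).Walk u w := p.toPath.1 with hq
    have hqp : q.IsPath := p.toPath.2
    have hqt : q.IsTrail := hqp.isTrail
    have hedges : ∀ f ∈ q.edges, f ∈ G.edgeSet ∧ f ≠ s(u, w) := by
      intro f hf
      have := q.edges_subset_edgeSet hf
      rw [SimpleGraph.edgeSet_deleteEdges] at this
      exact ⟨this.1, by simpa using this.2⟩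
    have henot : s(u, w) ∉ q.edges := fun h => (hedges _ h).2 rfl
    refine ⟨insert s(u, w) q.edges.toFinset, ⟨?_, ?_⟩, Finset.mem_insert_self _ _⟩
    · intro f hf
      rcases Finset.mem_insert.mp (by exact_mod_cast hf) with rfl | hf'
      · exact he
      · exact (hedges _ (List.mem_toFinset.mp hf')).1
    · intro v
      have hcount : (q.edges.toFinset.filter fun f => v ∈ f).card
          = q.edges.countP (fun f => decide (v ∈ f)) := by
        have heq : q.edges.toFinset.filter (fun f => v ∈ f)
            = (q.edges.filter (fun f => decide (v ∈ f))).toFinset := by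
          ext x
          simp
        rw [heq, List.toFinset_card_of_nodup (hqt.edges_nodup.filter _),
          ← List.countP_eq_length_filter]
      have hpar := hqt.even_countP_edges_iff v
      have hne : u ≠ w := hadj.ne
      by_cases hv : v ∈ s(u, w)
      · have : (insert s(u, w) q.edges.toFinset).filter (fun f => v ∈ f)
            = insert s(u, w) (q.edges.toFinset.filter fun f => v ∈ f) := by
          rw [Finset.filter_insert, if_pos hv]
        rw [this, Finset.card_insert_of_notMem (by
          simp only [Finset.mem_filter, List.mem_toFinset]
          exact fun h => henot h.1), hcount]
        have hodd : ¬ Even (q.edges.countP fun f => decide (v ∈ f)) := by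
          rw [hpar]
          intro h
          rcases Sym2.mem_iff.mp hv with rfl | rfl
          · exact (h hne).1 rfl
          · exact (h hne).2 rfl
        rw [Nat.even_iff] at hodd ⊢
        omega
      · have : (insert s(u, w) q.edges.toFinset).filter (fun f => v ∈ f)
            = q.edges.toFinset.filter fun f => v ∈ f := by
          rw [Finset.filter_insert, if_neg hv]
        rw [this, hcount, hpar]
        intro _
        rw [Sym2.mem_iff, not_or] at hv
        exact hv

lemma two_mul_card_avoid_le [Fintype V] {G : SimpleGraph V} {e : Sym2 V}
    (he : e ∈ G.edgeSet) (hnc : ¬IsCutEdge G e) :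
    2 * ((Finset.univ.filter fun ψ : Finset (Sym2 V) => IsCirculation G ψ).filter
          fun ψ => e ∉ ψ).card
      ≤ (Finset.univ.filter fun ψ : Finset (Sym2 V) => IsCirculation G ψ).card := by
  classical
  set Zf := Finset.univ.filter fun ψ : Finset (Sym2 V) => IsCirculation G ψ with hZf
  obtain ⟨C, hC, heC⟩ := exists_circulation_of_not_cutEdge he hnc
  have hinj : (Zf.filter fun ψ => e ∉ ψ).card ≤ (Zf.filter fun ψ => ¬ e ∉ ψ).card := by
    apply Finset.card_le_card_of_injOn (fun ψ => ψ ∆ C)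
    · intro ψ hψ
      simp only [hZf, Finset.mem_coe, Finset.mem_filter, Finset.mem_univ, true_and] at hψ ⊢
      refine ⟨circulation_symmDiff hψ.1 hC, ?_⟩
      simp only [not_not, Finset.mem_symmDiff]
      exact Or.inr ⟨heC, hψ.2⟩
    · intro a _ b _ hab
      have := congrArg (fun s => s ∆ C) hab
      simpa [symmDiff_assoc] using this
  have hdisj : Disjoint (Zf.filter fun ψ => e ∉ ψ) (Zf.filter fun ψ => ¬ e ∉ ψ) :=
    Finset.disjoint_filter_filter_not _ _ _
  have hunion : (Zf.filter fun ψ => e ∉ ψ) ∪ (Zf.filter fun ψ => ¬ e ∉ ψ) = Zf :=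
    Finset.filter_union_filter_not_eq _ _
  have := Finset.card_union_of_disjoint hdisj
  rw [hunion] at this
  omega

/-- Let `G` have `n ≥ 2` vertices and `m` edges, and let `2^b ≥ n·m`.
Then the number of `b`-tuples of binary circulations for which some non-cut edge `e`
avoids every `φ_i` is at most `|Z|^b / n`, where `Z` is the cycle space (stated in the
equivalent product form `n · #bad ≤ |Z|^b`). -/
theorem count_bad_tuples_cutEdges [Fintype V] (G : SimpleGraph V) (hG : G.Connected)
    (hn : 2 ≤ Fintype.card V) (b : ℕ)
    (hb : Fintype.card V * Fintype.card G.edgeSet ≤ 2 ^ b) :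
    Fintype.card V *
        Set.ncard {φ : Fin b → Finset (Sym2 V) |
          (∀ i, IsCirculation G (φ i)) ∧
            ∃ e ∈ G.edgeSet, ¬IsCutEdge G e ∧ ∀ i, e ∉ φ i}
      ≤ (Set.ncard {ψ : Finset (Sym2 V) | IsCirculation G ψ}) ^ b := by
  classical
  set Zf := Finset.univ.filter fun ψ : Finset (Sym2 V) => IsCirculation G ψ with hZf
  have hZcard : Set.ncard {ψ : Finset (Sym2 V) | IsCirculation G ψ} = Zf.card := by
    rw [Set.ncard_eq_toFinset_card', Set.toFinset_setOf]
  set BadS := {φ : Fin b → Finset (Sym2 V) |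
      (∀ i, IsCirculation G (φ i)) ∧
        ∃ e ∈ G.edgeSet, ¬IsCutEdge G e ∧ ∀ i, e ∉ φ i} with hBadS
  set BadF := Finset.univ.filter fun φ : Fin b → Finset (Sym2 V) =>
      (∀ i, IsCirculation G (φ i)) ∧
        ∃ e ∈ G.edgeSet, ¬IsCutEdge G e ∧ ∀ i, e ∉ φ i with hBadF
  have hBcard : BadS.ncard = BadF.card := by
    rw [hBadS, Set.ncard_eq_toFinset_card', Set.toFinset_setOf]
  set E' := G.edgeFinset.filter fun e => ¬IsCutEdge G e with hE'
  set A : Sym2 V → Finset (Finset (Sym2 V)) := fun e => Zf.filter fun ψ => e ∉ ψ with hA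
  set M := E'.sup fun e => (A e).card with hM
  -- BadF is contained in a union of product sets
  have hsub : BadF ⊆ E'.biUnion fun e => Fintype.piFinset fun _ : Fin b => A e := by
    intro φ hφ
    rw [hBadF, Finset.mem_filter] at hφ
    obtain ⟨_, hcirc, e, heE, hnc, havoid⟩ := hφ
    refine Finset.mem_biUnion.mpr ⟨e, ?_, ?_⟩
    · rw [hE', Finset.mem_filter]
      exact ⟨SimpleGraph.mem_edgeFinset.mpr heE, hnc⟩
    · rw [Fintype.mem_piFinset]
      intro i
      rw [hA, Finset.mem_filter]
      exact ⟨Finset.mem_filter.mpr ⟨Finset.mem_univ _, hcirc i⟩, havoid i⟩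
  have hcount : BadF.card ≤ E'.card * M ^ b := by
    calc BadF.card ≤ (E'.biUnion fun e => Fintype.piFinset fun _ : Fin b => A e).card :=
          Finset.card_le_card hsub
      _ ≤ ∑ e ∈ E', (Fintype.piFinset fun _ : Fin b => A e).card :=
          Finset.card_biUnion_le
      _ ≤ ∑ _e ∈ E', M ^ b := by
          refine Finset.sum_le_sum fun e heE => ?_
          rw [Fintype.card_piFinset]
          simp only [Finset.prod_const, Finset.card_univ, Fintype.card_fin]
          exact Nat.pow_le_pow_left (hM ▸ Finset.le_sup (f := fun e => (A e).card) heE) b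
      _ = E'.card * M ^ b := by rw [Finset.sum_const, smul_eq_mul]
  have hE'le : E'.card ≤ Fintype.card G.edgeSet := by
    rw [← SimpleGraph.edgeFinset_card]
    exact Finset.card_le_card (Finset.filter_subset _ _)
  have hMZ : 2 * M ≤ Zf.card := by
    have hMle : M ≤ Zf.card / 2 := by
      rw [hM]
      apply Finset.sup_le
      intro e heE
      rw [hE', Finset.mem_filter] at heE
      have h2 := two_mul_card_avoid_le (SimpleGraph.mem_edgeFinset.mp heE.1) heE.2
      rw [← hZf] at h2
      rw [Nat.le_div_iff_mul_le (by norm_num)]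
      simp only [hA]
      omega
    omega
  rw [hZcard, hBcard]
  calc Fintype.card V * BadF.card
      ≤ Fintype.card V * (E'.card * M ^ b) := Nat.mul_le_mul_left _ hcount
    _ ≤ Fintype.card V * (Fintype.card G.edgeSet * M ^ b) := by
        exact Nat.mul_le_mul_left _ (Nat.mul_le_mul_right _ hE'le)
    _ = (Fintype.card V * Fintype.card G.edgeSet) * M ^ b := by ring
    _ ≤ 2 ^ b * M ^ b := Nat.mul_le_mul_right _ hb
    _ = (2 * M) ^ b := (mul_pow 2 M b).symm
    _ ≤ Zf.card ^ b := Nat.pow_le_pow_left hMZ b
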